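/- Utilitarian PoC of a tree for two agents equals 2(m−1)/m. Lower bound construction: properly 2-color the tree red/blue; agent 1 values each red vertex v at deg(v)/(m−1) and agent 2 values each blue vertex v at deg(v)/(m−1) (zero otherwise). Then each agent's total value is 1, the unconstrained optimal utilitarian welfare is 2, and every connected 2-allocation (which cuts exactly one edge of the tree) has utilitarian welfare at most m/(m−1). -/

import Mathlib

open Finset SimpleGraph Walk
set_option linter.unusedSectionVars false

namespace UPoC
variable {V : Type*} [Fintype V] [DecidableEq V] {G : SimpleGraph V}

noncomputable def tpath (hT : G.IsTree) (x y : V) : G.Walk x y :=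
  (hT.existsUnique_path x y).exists.choose

lemma tpath_isPath (hT : G.IsTree) (x y : V) : (tpath hT x y).IsPath :=
  (hT.existsUnique_path x y).exists.choose_spec

lemma tpath_unique (hT : G.IsTree) {x y : V} {p : G.Walk x y} (hp : p.IsPath) :
    p = tpath hT x y :=
  (hT.existsUnique_path x y).unique hp (tpath_isPath hT x y)

lemma tpath_self (hT : G.IsTree) (x : V) : tpath hT x x = Walk.nil :=
  (tpath_unique hT IsPath.nil).symm

lemma tpath_adj (hT : G.IsTree) {x y : V} (h : G.Adj x y) :
    tpath hT x y = Walk.cons h Walk.nil := by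
  have hp : (Walk.cons h Walk.nil).IsPath := by simp [Walk.isPath_def, h.ne]
  exact (tpath_unique hT hp).symm

noncomputable def side (hT : G.IsTree) (x y : V) : Finset V :=
  univ.filter (fun w => y ∈ (tpath hT w x).support)

lemma mem_side {hT : G.IsTree} {x y w : V} :
    w ∈ side hT x y ↔ y ∈ (tpath hT w x).support := by simp [side]

lemma takeUntil_eq_tpath (hT : G.IsTree) {x y w : V} (hy : y ∈ (tpath hT w x).support) :
    (tpath hT w x).takeUntil y hy = tpath hT w y :=
  tpath_unique hT ((tpath_isPath hT w x).takeUntil hy)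

lemma side_mem_of_mem_takeUntil (hT : G.IsTree) {x y w z : V}
    (hy : y ∈ (tpath hT w x).support) (hz : z ∈ ((tpath hT w x).takeUntil y hy).support) :
    y ∈ (tpath hT z x).support := by
  set p := tpath hT w x with hpdef
  have h1 : (((p.takeUntil y hy).dropUntil z hz).append (p.dropUntil y hy)).IsPath := by
    have heq : ((p.takeUntil y hy).takeUntil z hz).append
        (((p.takeUntil y hy).dropUntil z hz).append (p.dropUntil y hy)) = p := by
      rw [Walk.append_assoc, (p.takeUntil y hy).take_spec hz, p.take_spec hy]
    have hp : p.IsPath := tpath_isPath hT w x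
    rw [← heq] at hp
    exact hp.of_append_right
  rw [← tpath_unique hT h1, Walk.mem_support_append_iff]
  exact Or.inr (Walk.start_mem_support _)


lemma mem_side_of_support (hT : G.IsTree) {x y w z : V} (hw : w ∈ side hT x y)
    (hz : z ∈ (tpath hT w y).support) : z ∈ side hT x y := by
  rw [mem_side] at hw ⊢
  exact side_mem_of_mem_takeUntil hT hw (by rwa [takeUntil_eq_tpath hT hw])

lemma self_mem_side (hT : G.IsTree) {x y : V} : y ∈ side hT x y := by
  rw [mem_side]; exact Walk.start_mem_support _

lemma not_mem_side_self (hT : G.IsTree) {x y : V} (h : G.Adj x y) : x ∉ side hT x y := by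
  rw [mem_side, tpath_self]
  simp [h.ne']

lemma isPath_concat {u v w : V} {p : G.Walk u v} (hp : p.IsPath) (h : G.Adj v w)
    (hw : w ∉ p.support) : (p.concat h).IsPath := by
  rw [Walk.isPath_def, Walk.support_concat]
  rw [List.nodup_append]
  refine ⟨hp.support_nodup, List.nodup_singleton _, fun a ha b hb => by
    simp at hb; subst hb; exact fun h => hw (h ▸ ha)⟩

lemma side_union (hT : G.IsTree) {x y : V} (h : G.Adj x y) {w : V}
    (hw : w ∉ side hT y x) : w ∈ side hT x y := by
  rw [mem_side] at hw ⊢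
  have hp : ((tpath hT w y).concat h.symm).IsPath :=
    isPath_concat (tpath_isPath hT w y) h.symm hw
  rw [← tpath_unique hT hp, Walk.support_concat]
  exact List.mem_append_left _ (Walk.end_mem_support _)

lemma side_disjoint (hT : G.IsTree) {x y : V} (h : G.Adj x y) {w : V}
    (hw : w ∈ side hT x y) : w ∉ side hT y x := by
  intro hw'
  rw [mem_side] at hw hw'
  have h1 : x ∈ ((tpath hT w x).takeUntil y hw).support := by
    rw [takeUntil_eq_tpath hT hw]; exact hw'
  have h2 := side_mem_of_mem_takeUntil hT hw h1
  rw [tpath_self] at h2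
  simp only [Walk.support_nil, List.mem_singleton] at h2
  exact h.ne' h2

lemma compl_side (hT : G.IsTree) {x y : V} (h : G.Adj x y) :
    (side hT x y)ᶜ = side hT y x := by
  ext w
  simp only [Finset.mem_compl]
  exact ⟨fun hw => side_union hT h.symm hw, fun hw hw' => side_disjoint hT h.symm hw hw'⟩

lemma side_eq_of_mem (hT : G.IsTree) {v y y' w : V} (hy : G.Adj v y) (hy' : G.Adj v y')
    (h1 : w ∈ side hT v y) (h2 : w ∈ side hT v y') : y = y' := by
  rw [mem_side] at h1 h2
  have hd : (tpath hT w v).dropUntil y' h2 = Walk.cons hy'.symm Walk.nil := by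
    rw [tpath_unique hT ((tpath_isPath hT w v).dropUntil h2), tpath_adj hT hy'.symm]
  have hy_mem := h1
  rw [← (tpath hT w v).take_spec h2, Walk.mem_support_append_iff, hd] at hy_mem
  rcases hy_mem with hmem | hmem
  · have h3 := side_mem_of_mem_takeUntil hT h2 hmem
    rw [tpath_adj hT hy.symm] at h3
    simp only [Walk.support_cons, Walk.support_nil, List.mem_cons, List.mem_singleton] at h3
    rcases h3 with rfl | h3
    · rfl
    · simp at h3; exact absurd h3.symm hy'.ne
  · simp only [Walk.support_cons, Walk.support_nil, List.mem_cons, List.mem_singleton] at hmem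
    rcases hmem with rfl | hmem
    · rfl
    · simp at hmem; exact absurd hmem.symm hy.ne

lemma exists_side_mem (hT : G.IsTree) {v w : V} (hvw : w ≠ v) :
    ∃ y, G.Adj v y ∧ w ∈ side hT v y := by
  have hnil : ¬ (tpath hT w v).reverse.Nil := Walk.not_nil_of_ne (Ne.symm hvw)
  refine ⟨(tpath hT w v).reverse.getVert 1, Walk.adj_snd hnil, ?_⟩
  rw [mem_side]
  have hmem : (tpath hT w v).reverse.getVert 1 ∈ (tpath hT w v).reverse.support :=
    Walk.mem_support_iff_exists_getVert.2 ⟨1, rfl, by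
      rw [Walk.not_nil_iff_lt_length] at hnil; omega⟩
  rwa [Walk.support_reverse, List.mem_reverse] at hmem


lemma reachable_induce_of_walk {s : Set V} {b : V} :
    ∀ {a : V} (p : G.Walk a b) (_ : ∀ z ∈ p.support, z ∈ s) (ha : a ∈ s) (hb : b ∈ s),
      (G.induce s).Reachable ⟨a, ha⟩ ⟨b, hb⟩ := by
  intro a p
  induction p with
  | nil => intro _ ha hb; rfl
  | @cons u v w h q ih =>
    intro hsup ha hb
    have hv : v ∈ s := hsup v (by simp)
    have hadj : (G.induce s).Adj ⟨u, ha⟩ ⟨v, hv⟩ := h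
    exact hadj.reachable.trans (ih (fun z hz => hsup z (by simp [hz])) hv hb)

lemma side_connected (hT : G.IsTree) {x y : V} (h : G.Adj x y) :
    (G.induce ((side hT x y : Finset V) : Set V)).Connected := by
  rw [SimpleGraph.connected_iff]
  constructor
  · rintro ⟨a, ha⟩ ⟨b, hb⟩
    have ha' : a ∈ side hT x y := by simpa using ha
    have hb' : b ∈ side hT x y := by simpa using hb
    have hy : y ∈ ((side hT x y : Finset V) : Set V) := by
      simpa using self_mem_side (hT := hT) (x := x) (y := y)
    have r1 := reachable_induce_of_walk (G := G) (tpath hT a y)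
      (fun z hz => by simpa using mem_side_of_support hT ha' hz) ha hy
    have r2 := reachable_induce_of_walk (G := G) (tpath hT b y)
      (fun z hz => by simpa using mem_side_of_support hT hb' hz) hb hy
    exact r1.trans r2.symm
  · exact ⟨⟨y, by simpa using self_mem_side (hT := hT) (x := x) (y := y)⟩⟩


variable [DecidableRel G.Adj]

lemma sum_side_neighbors (hT : G.IsTree) {δ : V → ℝ} (h0 : ∑ v, δ v = 0) (v : V) :
    δ v + ∑ y ∈ univ.filter (G.Adj v), ∑ w ∈ side hT v y, δ w = 0 := by
  classical
  have hbU : (univ.filter (G.Adj v)).biUnion (fun y => side hT v y) = univ.erase v := by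
    ext w
    simp only [Finset.mem_biUnion, Finset.mem_filter, Finset.mem_univ, true_and,
      Finset.mem_erase, and_true]
    constructor
    · rintro ⟨y, hy, hw⟩ rfl
      exact not_mem_side_self hT hy hw
    · intro hw
      exact exists_side_mem hT hw
  have hdisj : (↑(univ.filter (G.Adj v)) : Set V).PairwiseDisjoint (fun y => side hT v y) := by
    intro y hy y' hy' hne
    simp only [Finset.coe_filter, Set.mem_setOf_eq] at hy hy'
    simp only [Function.onFun]
    rw [Finset.disjoint_left]
    intro w hw hw'
    exact hne (side_eq_of_mem hT hy.2 hy'.2 hw hw')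
  have hsum : ∑ y ∈ univ.filter (G.Adj v), ∑ w ∈ side hT v y, δ w
      = ∑ w ∈ univ.erase v, δ w := by
    rw [← Finset.sum_biUnion hdisj, hbU]
  rw [hsum, Finset.add_sum_erase _ _ (Finset.mem_univ v), h0]

lemma sum_le_card_mul (hT : G.IsTree) {δ : V → ℝ} (h0 : ∑ v, δ v = 0) (A : Finset V) {t : ℝ}
    (ht0 : 0 ≤ t)
    (ht : ∀ x y, G.Adj x y → ∑ w ∈ side hT x y, δ w ≤ t) :
    ∑ w ∈ A, δ w ≤ (G.edgeFinset.card : ℝ) * t := by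
  classical
  set f : V × V → ℝ := fun p => ∑ w ∈ side hT p.1 p.2, δ w with hf
  have hcompl : ∀ {x y : V}, G.Adj x y → f (x, y) + f (y, x) = 0 := by
    intro x y h
    have : side hT y x = (side hT x y)ᶜ := (compl_side hT h).symm
    simp only [hf, this]
    rw [Finset.sum_add_sum_compl, h0]
  -- step 1 : rewrite ∑_{w∈A} δ w
  have step1 : ∑ w ∈ A, δ w = -∑ p ∈ (A ×ˢ univ).filter (fun p => G.Adj p.1 p.2), f p := by
    have : ∀ v ∈ A, δ v = -∑ y ∈ univ.filter (G.Adj v), f (v, y) := by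
      intro v _
      have := sum_side_neighbors hT h0 v
      simp only [hf]
      linarith [this]
    calc ∑ w ∈ A, δ w = ∑ v ∈ A, -∑ y ∈ univ.filter (G.Adj v), f (v, y) :=
          Finset.sum_congr rfl this
      _ = -∑ v ∈ A, ∑ y ∈ univ.filter (G.Adj v), f (v, y) := by
          rw [Finset.sum_neg_distrib]
      _ = -∑ p ∈ (A ×ˢ univ).filter (fun p => G.Adj p.1 p.2), f p := by
          rw [Finset.sum_filter, Finset.sum_product]
          congr 1
          refine Finset.sum_congr rfl fun v _ => ?_
          rw [Finset.sum_filter]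
  -- split the dart sum by whether the second coordinate lies in A
  set P := (A ×ˢ univ).filter (fun p => G.Adj p.1 p.2) with hP
  have hsplit : ∑ p ∈ P, f p
      = ∑ p ∈ P.filter (fun p => p.2 ∈ A), f p + ∑ p ∈ P.filter (fun p => p.2 ∉ A), f p :=
    (Finset.sum_filter_add_sum_filter_not _ _ _).symm
  have hfirst : ∑ p ∈ P.filter (fun p => p.2 ∈ A), f p = 0 := by
    refine Finset.sum_involution (fun p _ => p.swap) ?_ ?_ ?_ ?_
    · intro p hp
      simp only [hP, Finset.mem_filter, Finset.mem_product] at hp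
      exact hcompl hp.1.2
    · intro p hp _
      simp only [hP, Finset.mem_filter, Finset.mem_product] at hp
      intro hsw
      have : p.1 = p.2 := by
        have := congrArg Prod.fst hsw
        simpa using this.symm
      exact G.irrefl (this ▸ hp.1.2)
    · intro p hp
      simp only [hP, Finset.mem_filter, Finset.mem_product, Finset.mem_univ, and_true,
        Prod.fst_swap, Prod.snd_swap] at hp ⊢
      obtain ⟨⟨hpA, hadj⟩, hp2⟩ := hp
      exact ⟨⟨hp2, hadj.symm⟩, hpA⟩
    · intro p hp
      simp
  -- bound the second (crossing) sum
  have hbound : ∀ p ∈ P.filter (fun p => p.2 ∉ A), -f p ≤ t := by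
    intro p hp
    simp only [hP, Finset.mem_filter, Finset.mem_product] at hp
    have hadj := hp.1.2
    have := ht p.2 p.1 hadj.symm
    have h2 := hcompl hadj
    simp only [hf] at h2 ⊢
    linarith
  have hcard : (P.filter (fun p => p.2 ∉ A)).card ≤ G.edgeFinset.card := by
    apply Finset.card_le_card_of_injOn (fun p => s(p.1, p.2))
    · intro p hp
      simp only [Finset.mem_coe, hP, Finset.mem_filter, Finset.mem_product] at hp
      exact SimpleGraph.mem_edgeFinset.2 hp.1.2
    · intro p hp q hq heq
      simp only [Finset.mem_coe, hP, Finset.mem_filter, Finset.mem_product] at hp hq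
      rw [Sym2.eq_iff] at heq
      rcases heq with ⟨h1, h2⟩ | ⟨h1, h2⟩
      · exact Prod.ext h1 h2
      · exact absurd (show p.2 ∈ A by rw [h2]; exact hq.1.1.1) hp.2
  calc ∑ w ∈ A, δ w = -∑ p ∈ P, f p := step1
    _ = ∑ p ∈ P.filter (fun p => p.2 ∉ A), -f p := by
        rw [hsplit, hfirst, zero_add, Finset.sum_neg_distrib]
    _ ≤ ∑ _p ∈ P.filter (fun p => p.2 ∉ A), t := Finset.sum_le_sum hbound
    _ = ((P.filter (fun p => p.2 ∉ A)).card : ℝ) * t := by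
        rw [Finset.sum_const, nsmul_eq_mul]
    _ ≤ (G.edgeFinset.card : ℝ) * t := by
        apply mul_le_mul_of_nonneg_right _ ht0
        exact_mod_cast hcard


end UPoC

def ConnB {V : Type*} (G : SimpleGraph V) (s : Finset V) : Prop :=
  s = ∅ ∨ (G.induce (s : Set V)).Connected

def IsAlloc {V : Type*} [Fintype V] [DecidableEq V] {n : ℕ} (A : Fin n → Finset V) : Prop :=
  (∀ i j : Fin n, i ≠ j → Disjoint (A i) (A j)) ∧ Finset.univ.biUnion A = Finset.univ


namespace UPoC
variable {V : Type*} [Fintype V] [DecidableEq V] {G : SimpleGraph V}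

lemma alloc_snd_eq_compl {A : Fin 2 → Finset V} (hA : IsAlloc A) : A 1 = (A 0)ᶜ := by
  ext w
  simp only [Finset.mem_compl]
  constructor
  · intro h1 h0
    exact (Finset.disjoint_left.1 (hA.1 0 1 (by decide))) h0 h1
  · intro h0
    have hw : w ∈ Finset.univ.biUnion A := hA.2.symm ▸ Finset.mem_univ w
    obtain ⟨i, _, hi⟩ := Finset.mem_biUnion.1 hw
    have : i = 0 ∨ i = 1 := by omega
    rcases this with rfl | rfl
    · exact absurd hi h0
    · exact hi

variable [DecidableRel G.Adj]

lemma part1 (hT : G.IsTree) (m : ℕ) (hm : Fintype.card V = m) (hm2 : 2 ≤ m)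
    (u : Fin 2 → V → ℝ) (hpos : ∀ i v, 0 ≤ u i v) (hsum : ∀ i, ∑ v, u i v = 1)
    (A : Fin 2 → Finset V) (hA : IsAlloc A) :
    ∃ B : Fin 2 → Finset V, IsAlloc B ∧ (∀ i, ConnB G (B i)) ∧
      ∑ i, ∑ v ∈ A i, u i v ≤ (2 * ((m : ℝ) - 1) / m) * ∑ i, ∑ v ∈ B i, u i v := by
  obtain ⟨a, b, hab⟩ : ∃ a b : V, G.Adj a b := by
    have h1 : 1 < Fintype.card V := by omega
    rw [Fintype.one_lt_card_iff_nontrivial] at h1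
    obtain ⟨a, b, hne⟩ := h1.exists_pair_ne
    have hnil : ¬ (tpath hT a b).Nil := Walk.not_nil_of_ne hne
    exact ⟨a, _, Walk.adj_snd hnil⟩
  set δ : V → ℝ := fun v => u 0 v - u 1 v with hδ
  have h0 : ∑ v, δ v = 0 := by
    simp only [hδ, Finset.sum_sub_distrib, hsum 0, hsum 1, sub_self]
  set d : Finset V → ℝ := fun s => ∑ w ∈ s, δ w with hd
  have hcomplsum : ∀ {x y : V}, G.Adj x y → d (side hT x y) + d (side hT y x) = 0 := by
    intro x y h
    have hc : side hT y x = (side hT x y)ᶜ := (compl_side hT h).symm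
    rw [hd]; simp only [hc]
    rw [Finset.sum_add_sum_compl, h0]
  -- maximal cut value
  set E := Finset.univ.filter (fun p : V × V => G.Adj p.1 p.2) with hE
  have hEne : E.Nonempty := ⟨(a, b), by simp [hE, hab]⟩
  obtain ⟨q, hqmemE, hqmax⟩ := E.exists_max_image (fun p => d (side hT p.1 p.2)) hEne
  set t := d (side hT q.1 q.2) with htdef
  have hqadj : G.Adj q.1 q.2 := by simpa [hE] using hqmemE
  have ht : ∀ x y : V, G.Adj x y → d (side hT x y) ≤ t := by
    intro x y h
    exact hqmax (x, y) (by simp [hE, h])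
  have hq : d (side hT q.1 q.2) = t := rfl
  have ht0 : 0 ≤ t := by
    have h1 := ht a b hab
    have h2 := ht b a hab.symm
    have h3 := hcomplsum hab
    linarith
  have key : d (A 0) ≤ (G.edgeFinset.card : ℝ) * t :=
    sum_le_card_mul hT h0 (A 0) ht0 ht
  have hEcard : (G.edgeFinset.card : ℝ) = (m : ℝ) - 1 := by
    have h1 := hT.card_edgeFinset
    rw [hm] at h1
    have : G.edgeFinset.card = m - 1 := by omega
    rw [this]
    have : (1:ℕ) ≤ m := by omega
    push_cast [Nat.cast_sub this]
    ring
  have hd1 : d (A 0) ≤ 1 := by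
    have h1 : d (A 0) ≤ ∑ v ∈ A 0, u 0 v := by
      apply Finset.sum_le_sum
      intro v _
      simp only [hδ]
      have := hpos 1 v
      linarith
    have h2 : ∑ v ∈ A 0, u 0 v ≤ ∑ v, u 0 v :=
      Finset.sum_le_sum_of_subset_of_nonneg (Finset.subset_univ _) (fun v _ _ => hpos 0 v)
    rw [hsum 0] at h2
    linarith
  -- the connected allocation
  refine ⟨![side hT q.1 q.2, side hT q.2 q.1], ⟨?_, ?_⟩, ?_, ?_⟩
  · intro i j hij
    have hdisj : Disjoint (side hT q.1 q.2) (side hT q.2 q.1) := by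
      rw [← compl_side hT hqadj]
      exact disjoint_compl_right
    fin_cases i <;> fin_cases j <;>
      first
        | exact absurd rfl hij
        | simpa using hdisj
        | simpa using hdisj.symm
  · ext w
    simp only [Finset.mem_biUnion, Finset.mem_univ, true_and, iff_true]
    by_cases hw : w ∈ side hT q.1 q.2
    · exact ⟨0, by simpa using hw⟩
    · exact ⟨1, by simpa using side_union hT hqadj.symm hw⟩
  · intro i
    fin_cases i
    · exact Or.inr (by simpa using side_connected hT hqadj)
    · exact Or.inr (by simpa using side_connected hT hqadj.symm)
  · -- the welfare inequality
    have wB : ∑ i, ∑ v ∈ (![side hT q.1 q.2, side hT q.2 q.1]) i, u i v = 1 + t := by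
      rw [Fin.sum_univ_two]
      simp only [Matrix.cons_val_zero, Matrix.cons_val_one, Matrix.head_cons]
      have hc : side hT q.2 q.1 = (side hT q.1 q.2)ᶜ := (compl_side hT hqadj).symm
      rw [hc]
      have h1 : ∑ v ∈ (side hT q.1 q.2)ᶜ, u 1 v = 1 - ∑ v ∈ side hT q.1 q.2, u 1 v := by
        have := Finset.sum_add_sum_compl (side hT q.1 q.2) (u 1)
        rw [hsum 1] at this
        linarith
      rw [h1]
      have h2 : d (side hT q.1 q.2) = t := hq
      simp only [hd, hδ, Finset.sum_sub_distrib] at h2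
      linarith
    have wA : ∑ i, ∑ v ∈ A i, u i v = 1 + d (A 0) := by
      rw [Fin.sum_univ_two, alloc_snd_eq_compl hA]
      have h1 : ∑ v ∈ (A 0)ᶜ, u 1 v = 1 - ∑ v ∈ A 0, u 1 v := by
        have := Finset.sum_add_sum_compl (A 0) (u 1)
        rw [hsum 1] at this
        linarith
      rw [h1]
      simp only [hd, hδ, Finset.sum_sub_distrib]
      ring
    rw [wA, wB]
    have hM2 : (2:ℝ) ≤ (m:ℝ) := by exact_mod_cast hm2
    have hMpos : (0:ℝ) < (m:ℝ) := by linarith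
    rw [div_mul_eq_mul_div, le_div_iff₀ hMpos]
    have key2 : d (A 0) ≤ ((m:ℝ) - 1) * t := by rw [← hEcard]; exact key
    rcases le_total (((m:ℝ) - 1) * t) 1 with hcase | hcase
    · nlinarith [mul_le_mul_of_nonneg_left key2 hMpos.le,
        mul_le_mul_of_nonneg_left hcase (by linarith : (0:ℝ) ≤ (m:ℝ) - 2)]
    · nlinarith [mul_le_mul_of_nonneg_left hd1 hMpos.le,
        mul_le_mul_of_nonneg_left hcase (by linarith : (0:ℝ) ≤ 2)]


omit [DecidableRel G.Adj] in
lemma length_succ_of_adj (hT : G.IsTree) {x y : V} (h : G.Adj x y) (r : V) :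
    (tpath hT r y).length = (tpath hT r x).length + 1 ∨
      (tpath hT r x).length = (tpath hT r y).length + 1 := by
  by_cases hy : y ∈ (tpath hT r x).support
  · right
    have hspec := (tpath hT r x).take_spec hy
    have hdrop : (tpath hT r x).dropUntil y hy = Walk.cons h.symm Walk.nil := by
      rw [tpath_unique hT ((tpath_isPath hT r x).dropUntil hy), tpath_adj hT h.symm]
    have htake := takeUntil_eq_tpath hT hy
    calc (tpath hT r x).length
        = (((tpath hT r x).takeUntil y hy).append ((tpath hT r x).dropUntil y hy)).length := by
          rw [hspec]
      _ = (tpath hT r y).length + 1 := by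
          rw [Walk.length_append, htake, hdrop]; simp
  · left
    have hp : ((tpath hT r x).concat h).IsPath := isPath_concat (tpath_isPath hT r x) h hy
    rw [← tpath_unique hT hp, Walk.length_concat]

omit [DecidableRel G.Adj] in
lemma color_ne_of_adj (hT : G.IsTree) {x y : V} (h : G.Adj x y) (r : V) :
    (Even (tpath hT r x).length ↔ ¬ Even (tpath hT r y).length) := by
  rcases length_succ_of_adj hT h r with h1 | h1 <;> rw [h1] <;> simp [Nat.even_add_one]

lemma sum_deg_eq_card (s : Finset V) :
    ∑ v ∈ s, G.degree v = (s.biUnion fun v => {v} ×ˢ univ.filter (G.Adj v)).card := by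
  rw [Finset.card_biUnion]
  · refine Finset.sum_congr rfl fun v _ => ?_
    rw [Finset.card_product, Finset.card_singleton, one_mul]
    rw [← SimpleGraph.neighborFinset_eq_filter]
    rfl
  · intro x _ y _ hxy
    rw [Function.onFun, Finset.disjoint_left]
    rintro ⟨p1, p2⟩ hp hq
    simp only [Finset.mem_product, Finset.mem_singleton] at hp hq
    exact hxy (hp.1.symm ▸ hq.1 ▸ rfl)

lemma sum_deg_filter {P : V → Prop} [DecidablePred P]
    (hP : ∀ {x y : V}, G.Adj x y → (P x ↔ ¬ P y)) :
    ∑ v ∈ univ.filter P, G.degree v = G.edgeFinset.card := by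
  rw [sum_deg_eq_card]
  apply Finset.card_bij (fun p _ => s(p.1, p.2))
  · rintro ⟨p1, p2⟩ hp
    simp only [Finset.mem_biUnion, Finset.mem_product, Finset.mem_singleton, Finset.mem_filter,
      Finset.mem_univ, true_and] at hp
    obtain ⟨v, hv, rfl, hadj⟩ := hp
    exact SimpleGraph.mem_edgeFinset.2 hadj
  · rintro ⟨p1, p2⟩ hp ⟨q1, q2⟩ hq heq
    simp only [Finset.mem_biUnion, Finset.mem_product, Finset.mem_singleton, Finset.mem_filter,
      Finset.mem_univ, true_and] at hp hq
    obtain ⟨v, hv, rfl, hadj⟩ := hp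
    obtain ⟨w, hw, rfl, hadj'⟩ := hq
    rw [Sym2.eq_iff] at heq
    rcases heq with ⟨rfl, rfl⟩ | ⟨rfl, rfl⟩
    · rfl
    · exact absurd hw ((hP hadj).1 hv)
  · intro e he
    rw [SimpleGraph.mem_edgeFinset] at he
    induction e with
    | _ x y =>
      have hadj : G.Adj x y := he
      by_cases hx : P x
      · exact ⟨(x, y), by simp [hx, hadj], rfl⟩
      · have hy : P y := by
          by_contra hy
          exact hx ((hP hadj).2 hy)
        exact ⟨(y, x), by simp [hy, hadj.symm], Sym2.eq_swap⟩


omit [DecidableRel G.Adj] in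
lemma exists_walk_in_part {B : Finset V} (hC : ConnB G B) {a a' : V}
    (ha : a ∈ B) (ha' : a' ∈ B) : ∃ p : G.Walk a a', ∀ z ∈ p.support, z ∈ B := by
  rcases hC with hB | hB
  · exact absurd (hB ▸ ha) (Finset.notMem_empty a)
  · have hr := hB.preconnected ⟨a, by simpa using ha⟩ ⟨a', by simpa using ha'⟩
    obtain ⟨q⟩ := hr
    let φ : G.induce ((B : Finset V) : Set V) →g G :=
      ⟨Subtype.val, fun {u v} h => h⟩
    refine ⟨(q.map φ).copy rfl rfl, ?_⟩
    intro z hz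
    rw [Walk.support_copy, Walk.support_map] at hz
    obtain ⟨z', _, rfl⟩ := List.mem_map.1 hz
    exact Finset.mem_coe.1 z'.2

omit [DecidableRel G.Adj] in
lemma cross_unique (hT : G.IsTree) {B0 B1 : Finset V} (hdisj : Disjoint B0 B1)
    (hC0 : ConnB G B0) (hC1 : ConnB G B1)
    {a b a' b' : V} (hab : G.Adj a b) (hab' : G.Adj a' b')
    (ha : a ∈ B0) (hb : b ∈ B1) (ha' : a' ∈ B0) (hb' : b' ∈ B1) :
    s(a, b) = s(a', b') := by
  by_contra hne
  have hbridge := (isAcyclic_iff_forall_adj_isBridge.1 hT.IsAcyclic) hab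
  rw [isBridge_iff_adj_and_forall_walk_mem_edges] at hbridge
  obtain ⟨p0, hp0⟩ := exists_walk_in_part hC0 ha ha'
  obtain ⟨p1, hp1⟩ := exists_walk_in_part hC1 hb' hb
  have hmem := hbridge (p0.append (Walk.cons hab' p1))
  rw [Walk.edges_append, Walk.edges_cons, List.mem_append, List.mem_cons] at hmem
  rcases hmem with hmem | hmem | hmem
  · have : b ∈ p0.support := Walk.snd_mem_support_of_mem_edges p0 hmem
    exact Finset.disjoint_left.1 hdisj (hp0 b this) hb
  · exact hne hmem
  · have : a ∈ p1.support := Walk.fst_mem_support_of_mem_edges p1 hmem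
    exact Finset.disjoint_left.1 hdisj ha (hp1 a this)


lemma sum_deg_parts_le (hT : G.IsTree) {B0 B1 : Finset V} {red : V → Prop} [DecidablePred red]
    (hdisj : Disjoint B0 B1) (hC0 : ConnB G B0) (hC1 : ConnB G B1)
    (hcol : ∀ {x y : V}, G.Adj x y → (red x ↔ ¬ red y)) :
    ∑ v ∈ B0.filter red ∪ B1.filter (fun v => ¬ red v), G.degree v
      ≤ G.edgeFinset.card + 1 := by
  classical
  set s := B0.filter red ∪ B1.filter (fun v => ¬ red v) with hs
  have hmemS : ∀ {v : V}, v ∈ s ↔ (v ∈ B0 ∧ red v) ∨ (v ∈ B1 ∧ ¬ red v) := by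
    intro v
    simp [hs, Finset.mem_union, Finset.mem_filter]
  rw [sum_deg_eq_card]
  set T := s.biUnion fun v => {v} ×ˢ univ.filter (G.Adj v) with hTd
  have hmemT : ∀ {p : V × V}, p ∈ T ↔ p.1 ∈ s ∧ G.Adj p.1 p.2 := by
    rintro ⟨p1, p2⟩
    simp only [hTd, Finset.mem_biUnion, Finset.mem_product, Finset.mem_singleton,
      Finset.mem_filter, Finset.mem_univ, true_and]
    constructor
    · rintro ⟨v, hv, rfl, hadj⟩; exact ⟨hv, hadj⟩
    · rintro ⟨hv, hadj⟩; exact ⟨p1, hv, rfl, hadj⟩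
  set Cross : Sym2 V → Prop :=
    fun e => ∃ ab : V × V, e = s(ab.1, ab.2) ∧ G.Adj ab.1 ab.2 ∧ ab.1 ∈ B0 ∧ ab.2 ∈ B1
    with hCross
  have hmaps : ∀ p ∈ T, s(p.1, p.2) ∈ G.edgeFinset := by
    intro p hp
    exact SimpleGraph.mem_edgeFinset.2 (hmemT.1 hp).2
  rw [Finset.card_eq_sum_card_fiberwise hmaps]
  have hfiber : ∀ e ∈ G.edgeFinset,
      (T.filter fun p => s(p.1, p.2) = e).card ≤ if Cross e then 2 else 1 := by
    intro e he
    induction e with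
    | _ x y =>
      have hadj : G.Adj x y := SimpleGraph.mem_edgeFinset.1 he
      have hsub : (T.filter fun p => s(p.1, p.2) = s(x, y)) ⊆ {(x, y), (y, x)} := by
        rintro ⟨p1, p2⟩ hp
        rw [Finset.mem_filter] at hp
        rw [Sym2.eq_iff] at hp
        rcases hp.2 with ⟨rfl, rfl⟩ | ⟨rfl, rfl⟩
        · simp
        · simp
      have hboth : ((x, y) ∈ T ∧ (y, x) ∈ T) → Cross s(x, y) := by
        rintro ⟨h1, h2⟩
        have hx := (hmemT.1 h1).1
        have hy := (hmemT.1 h2).1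
        rw [hmemS] at hx hy
        by_cases hrx : red x
        · have hry : ¬ red y := (hcol hadj).1 hrx
          have hxB0 : x ∈ B0 := by tauto
          have hyB1 : y ∈ B1 := by tauto
          exact ⟨(x, y), rfl, hadj, hxB0, hyB1⟩
        · have hry : red y := by
            by_contra hry
            exact hrx ((hcol hadj).2 hry)
          have hxB1 : x ∈ B1 := by tauto
          have hyB0 : y ∈ B0 := by tauto
          exact ⟨(y, x), Sym2.eq_swap.symm, hadj.symm, hyB0, hxB1⟩
      by_cases hc : Cross s(x, y)
      · rw [if_pos hc]
        calc (T.filter fun p => s(p.1, p.2) = s(x, y)).card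
            ≤ ({(x, y), (y, x)} : Finset (V × V)).card := Finset.card_le_card hsub
          _ ≤ 2 := by
              apply le_trans (Finset.card_insert_le _ _)
              simp
      · rw [if_neg hc]
        rw [Finset.card_le_one]
        intro p hp q hq
        have hp2 := hsub hp
        have hq2 := hsub hq
        simp only [Finset.mem_insert, Finset.mem_singleton] at hp2 hq2
        rcases hp2 with rfl | rfl <;> rcases hq2 with rfl | rfl
        · rfl
        · exact absurd (hboth ⟨(Finset.mem_filter.1 hp).1, (Finset.mem_filter.1 hq).1⟩) hc
        · exact absurd (hboth ⟨(Finset.mem_filter.1 hq).1, (Finset.mem_filter.1 hp).1⟩) hc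
        · rfl
  have hcross : (G.edgeFinset.filter Cross).card ≤ 1 := by
    rw [Finset.card_le_one]
    intro e he e' he'
    rw [Finset.mem_filter] at he he'
    obtain ⟨ab, rfl, hadj, h1, h2⟩ := he.2
    obtain ⟨ab', rfl, hadj', h1', h2'⟩ := he'.2
    exact cross_unique hT hdisj hC0 hC1 hadj hadj' h1 h2 h1' h2'
  calc ∑ e ∈ G.edgeFinset, (T.filter fun p => s(p.1, p.2) = e).card
      ≤ ∑ e ∈ G.edgeFinset, if Cross e then 2 else 1 := Finset.sum_le_sum hfiber
    _ = ∑ e ∈ G.edgeFinset, (1 + if Cross e then 1 else 0) := by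
        refine Finset.sum_congr rfl fun e _ => ?_
        by_cases hc : Cross e <;> simp [hc]
    _ = G.edgeFinset.card + (G.edgeFinset.filter Cross).card := by
        rw [Finset.sum_add_distrib, Finset.sum_const, smul_eq_mul, mul_one]
        congr 1
        rw [← Finset.sum_filter, Finset.sum_const, smul_eq_mul, mul_one]
    _ ≤ G.edgeFinset.card + 1 := by omega


lemma part2 (hT : G.IsTree) (m : ℕ) (hm : Fintype.card V = m) (hm2 : 2 ≤ m) :
    ∃ u : Fin 2 → V → ℝ, (∀ i v, 0 ≤ u i v) ∧ (∀ i, ∑ v, u i v = 1) ∧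
      (∃ A : Fin 2 → Finset V, IsAlloc A ∧ ∑ i, ∑ v ∈ A i, u i v = 2) ∧
      (∀ B : Fin 2 → Finset V, IsAlloc B → (∀ i, ConnB G (B i)) →
        ∑ i, ∑ v ∈ B i, u i v ≤ (m : ℝ) / ((m : ℝ) - 1)) := by
  classical
  obtain ⟨r⟩ := hT.isConnected.nonempty
  set red : V → Prop := fun v => Even (tpath hT r v).length with hred
  have hcol : ∀ {x y : V}, G.Adj x y → (red x ↔ ¬ red y) := by
    intro x y h
    exact color_ne_of_adj hT h r
  have hcol' : ∀ {x y : V}, G.Adj x y → (¬ red x ↔ ¬ ¬ red y) := by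
    intro x y h
    rw [not_not]
    constructor
    · intro hx
      by_contra hy
      exact hx ((hcol h).2 hy)
    · intro hy hx
      exact (hcol h).1 hx hy
  set c : ℝ := (m : ℝ) - 1 with hc
  have hm2R : (2:ℝ) ≤ (m:ℝ) := by exact_mod_cast hm2
  have hcpos : 0 < c := by rw [hc]; linarith
  have hEcard : (G.edgeFinset.card : ℝ) = c := by
    have h1 := hT.card_edgeFinset
    rw [hm] at h1
    have h2 : G.edgeFinset.card = m - 1 := by omega
    rw [h2, hc]
    have : (1:ℕ) ≤ m := by omega
    push_cast [Nat.cast_sub this]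
    ring
  set u : Fin 2 → V → ℝ :=
    ![fun v => if red v then (G.degree v : ℝ) / c else 0,
      fun v => if red v then 0 else (G.degree v : ℝ) / c] with hu
  have hpos : ∀ i v, 0 ≤ u i v := by
    intro i v
    have h0 : 0 ≤ (G.degree v : ℝ) / c := by positivity
    fin_cases i
    · by_cases hv : red v <;> simp [hu, hv, h0]
    · by_cases hv : red v <;> simp [hu, hv, h0]
  have hsum0 : ∀ (P : V → Prop) (_ : DecidablePred P) (s : Finset V),
      ∑ v ∈ s, (if P v then (G.degree v : ℝ) / c else 0)
        = (↑(∑ v ∈ s.filter P, G.degree v) : ℝ) / c := by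
    intro P hP s
    rw [← Finset.sum_filter, Nat.cast_sum, Finset.sum_div]
  have hsumfull : ∀ (P : V → Prop) (_ : DecidablePred P)
      (_ : ∀ {x y : V}, G.Adj x y → (P x ↔ ¬ P y)),
      ∑ v, (if P v then (G.degree v : ℝ) / c else 0) = 1 := by
    intro P hP hPcol
    rw [hsum0 P hP univ, sum_deg_filter hPcol, hEcard, div_self hcpos.ne']
  have hsum : ∀ i, ∑ v, u i v = 1 := by
    intro i
    have hi : i = 0 ∨ i = 1 := by omega
    rcases hi with rfl | rfl
    · simpa only [hu, Matrix.cons_val_zero] using hsumfull red _ hcol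
    · simp only [hu, Matrix.cons_val_one, Matrix.head_cons, Matrix.cons_val_zero]
      have : ∀ v : V, (if red v then 0 else (G.degree v : ℝ) / c)
          = (if ¬ red v then (G.degree v : ℝ) / c else 0) := by
        intro v; by_cases hv : red v <;> simp [hv]
      rw [Finset.sum_congr rfl fun v _ => this v]
      exact hsumfull (fun v => ¬ red v) _ hcol'
  refine ⟨u, hpos, hsum, ⟨![univ.filter red, univ.filter (fun v => ¬ red v)], ⟨?_, ?_⟩, ?_⟩, ?_⟩
  · intro i j hij
    have hd : Disjoint (univ.filter red) (univ.filter (fun v => ¬ red v)) := by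
      rw [Finset.disjoint_left]
      intro w hw hw'
      simp only [Finset.mem_filter] at hw hw'
      exact hw'.2 hw.2
    fin_cases i <;> fin_cases j <;>
      first
        | exact absurd rfl hij
        | simpa using hd
        | simpa using hd.symm
  · ext w
    simp only [Finset.mem_biUnion, Finset.mem_univ, true_and, iff_true]
    by_cases hw : red w
    · exact ⟨0, by simp [hw]⟩
    · exact ⟨1, by simp [hw]⟩
  · rw [Fin.sum_univ_two]
    simp only [Matrix.cons_val_zero, Matrix.cons_val_one, Matrix.head_cons]
    have e0 : ∑ v ∈ univ.filter red, u 0 v = 1 := by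
      rw [← hsum 0]
      refine Finset.sum_subset (Finset.filter_subset _ _) ?_
      intro v _ hv
      simp only [Finset.mem_filter, Finset.mem_univ, true_and] at hv
      simp [hu, hv]
    have e1 : ∑ v ∈ univ.filter (fun v => ¬ red v), u 1 v = 1 := by
      rw [← hsum 1]
      refine Finset.sum_subset (Finset.filter_subset _ _) ?_
      intro v _ hv
      simp only [Finset.mem_filter, Finset.mem_univ, true_and, not_not] at hv
      simp [hu, hv]
    rw [e0, e1]; norm_num
  · intro B hB hConn
    rw [Fin.sum_univ_two]
    have hcompl := alloc_snd_eq_compl hB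
    have s0 : ∑ v ∈ B 0, u 0 v = (↑(∑ v ∈ (B 0).filter red, G.degree v) : ℝ) / c := by
      simp only [hu, Matrix.cons_val_zero]
      exact hsum0 red _ (B 0)
    have s1 : ∑ v ∈ B 1, u 1 v
        = (↑(∑ v ∈ (B 1).filter (fun v => ¬ red v), G.degree v) : ℝ) / c := by
      simp only [hu, Matrix.cons_val_one, Matrix.head_cons]
      rw [← hsum0 (fun v => ¬ red v) _ (B 1)]
      refine Finset.sum_congr rfl fun v _ => ?_
      by_cases hv : red v <;> simp [hv]
    rw [s0, s1, ← add_div]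
    have hdisjB : Disjoint (B 0) (B 1) := hB.1 0 1 (by decide)
    have hkey := sum_deg_parts_le hT hdisjB (hConn 0) (hConn 1) hcol
    have hsplit : ∑ v ∈ (B 0).filter red, G.degree v
        + ∑ v ∈ (B 1).filter (fun v => ¬ red v), G.degree v
        = ∑ v ∈ (B 0).filter red ∪ (B 1).filter (fun v => ¬ red v), G.degree v := by
      rw [Finset.sum_union]
      rw [Finset.disjoint_left]
      intro w hw hw'
      simp only [Finset.mem_filter] at hw hw'
      exact hw'.2 hw.2
    have hnum : (↑(∑ v ∈ (B 0).filter red, G.degree v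
        + ∑ v ∈ (B 1).filter (fun v => ¬ red v), G.degree v) : ℝ) ≤ (m : ℝ) := by
      rw [hsplit]
      calc (↑(∑ v ∈ (B 0).filter red ∪ (B 1).filter (fun v => ¬ red v), G.degree v) : ℝ)
          ≤ (↑(G.edgeFinset.card + 1) : ℝ) := by exact_mod_cast hkey
        _ = (m : ℝ) := by push_cast; rw [hEcard, hc]; ring
    rw [← Nat.cast_add]
    gcongr

end UPoC

/-- for a tree on `m ≥ 2` vertices and two agents, the utilitarian price of
connectivity equals `2(m−1)/m`.  Upper bound: the welfare of any allocation is matched up to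
factor `2(m−1)/m` by a connected allocation.  Lower bound: there is a normalized instance
(from a proper 2-coloring with values `deg(v)/(m−1)`) in which some allocation has utilitarian
welfare `2`, while every connected allocation has utilitarian welfare at most `m/(m−1)`. -/
theorem util_poc_tree {V : Type*} [Fintype V] [DecidableEq V]
    (G : SimpleGraph V) (hT : G.IsTree) (m : ℕ) (hm : Fintype.card V = m) (hm2 : 2 ≤ m) :
    (∀ u : Fin 2 → V → ℝ, (∀ i v, 0 ≤ u i v) → (∀ i, ∑ v, u i v = 1) →
      ∀ A : Fin 2 → Finset V, IsAlloc A →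
        ∃ B : Fin 2 → Finset V, IsAlloc B ∧ (∀ i, ConnB G (B i)) ∧
          ∑ i, ∑ v ∈ A i, u i v ≤ (2 * ((m : ℝ) - 1) / m) * ∑ i, ∑ v ∈ B i, u i v) ∧
    (∃ u : Fin 2 → V → ℝ, (∀ i v, 0 ≤ u i v) ∧ (∀ i, ∑ v, u i v = 1) ∧
      (∃ A : Fin 2 → Finset V, IsAlloc A ∧ ∑ i, ∑ v ∈ A i, u i v = 2) ∧
      (∀ B : Fin 2 → Finset V, IsAlloc B → (∀ i, ConnB G (B i)) →
        ∑ i, ∑ v ∈ B i, u i v ≤ (m : ℝ) / ((m : ℝ) - 1))) := by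
  haveI : DecidableRel G.Adj := Classical.decRel _
  constructor
  · intro u hpos hsum A hA
    exact UPoC.part1 hT m hm hm2 u hpos hsum A hA
  · exact UPoC.part2 hT m hm hm2
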